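/- For every simple regular expression E over an alphabet α, the set of all iterated Antimirov partial derivatives of E, namely ⋃_{w ∈ α*} ∂_w(E), is a finite set of regular expressions. In particular the set {∂_w(E) | w ∈ α*} of sets of expressions is finite, i.e., the Antimirov derivation is finite. -/
import Mathlib


open scoped Classical

/-- The Antimirov partial derivative of a regular expression with respect to a symbol. -/
noncomputable def aderiv {α : Type*} (a : α) : RegularExpression α → Set (RegularExpression α)
  | .zero => ∅
  | .epsilon => ∅
  | .char b => if b = a then {1} else ∅
  | .plus E₁ E₂ => aderiv a E₁ ∪ aderiv a E₂
  | .comp E₁ E₂ =>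
      if [] ∈ E₁.matches' then ((· * E₂) '' aderiv a E₁) ∪ aderiv a E₂
      else (· * E₂) '' aderiv a E₁
  | .star E₁ => (· * E₁.star) '' aderiv a E₁

/-- Iterated Antimirov partial derivative with respect to a word. -/
noncomputable def aderivWord {α : Type*} : List α → RegularExpression α → Set (RegularExpression α)
  | [], E => {E}
  | a :: w, E => ⋃ F ∈ aderiv a E, aderivWord w F

/-- Left quotient of a language by a word. -/
def lquot {α : Type*} (w : List α) (L : Language α) : Language α := {v | w ++ v ∈ L}

namespace AntimirovAux

/-- A finite overapproximation of all partial derivatives of `E`. -/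
def supp {α : Type*} : RegularExpression α → Set (RegularExpression α)
  | .zero => ∅
  | .epsilon => ∅
  | .char _ => {1}
  | .plus E₁ E₂ => supp E₁ ∪ supp E₂
  | .comp E₁ E₂ => ((· * E₂) '' supp E₁) ∪ supp E₂
  | .star E₁ => (· * E₁.star) '' supp E₁

lemma supp_finite {α : Type*} (E : RegularExpression α) : (supp E).Finite := by
  induction E with
  | zero => exact Set.finite_empty
  | epsilon => exact Set.finite_empty
  | char _ => exact Set.finite_singleton _
  | plus E₁ E₂ ih₁ ih₂ => exact ih₁.union ih₂
  | comp E₁ E₂ ih₁ ih₂ => exact (ih₁.image _).union ih₂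
  | star E₁ ih => exact ih.image _

lemma aderiv_subset_supp {α : Type*} (a : α) (E : RegularExpression α) :
    aderiv a E ⊆ supp E := by
  induction E with
  | zero => simp [aderiv, supp]
  | epsilon => simp [aderiv, supp]
  | char b => by_cases h : b = a <;> simp [aderiv, supp, h]
  | plus E₁ E₂ ih₁ ih₂ =>
      simp only [aderiv, supp]; exact Set.union_subset_union ih₁ ih₂
  | comp E₁ E₂ ih₁ ih₂ =>
      simp only [aderiv, supp]
      split
      · exact Set.union_subset_union (Set.image_mono ih₁) ih₂
      · exact (Set.image_mono ih₁).trans Set.subset_union_left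
  | star E₁ ih =>
      simp only [aderiv, supp]; exact Set.image_mono ih

lemma aderiv_supp_subset {α : Type*} (a : α) (E : RegularExpression α) :
    ∀ F ∈ supp E, aderiv a F ⊆ supp E := by
  induction E with
  | zero => simp [supp]
  | epsilon => simp [supp]
  | char b =>
      intro F hF
      simp only [supp, Set.mem_singleton_iff] at hF
      subst hF
      simp [aderiv]
  | plus E₁ E₂ ih₁ ih₂ =>
      rintro F (hF | hF)
      · exact (ih₁ F hF).trans Set.subset_union_left
      · exact (ih₂ F hF).trans Set.subset_union_right
  | comp E₁ E₂ ih₁ ih₂ =>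
      rintro F (⟨G, hG, rfl⟩ | hF)
      · show aderiv a (RegularExpression.comp G E₂) ⊆ _
        simp only [aderiv, supp]
        split
        · exact Set.union_subset
            ((Set.image_mono (ih₁ G hG)).trans Set.subset_union_left)
            ((aderiv_subset_supp a E₂).trans Set.subset_union_right)
        · exact (Set.image_mono (ih₁ G hG)).trans Set.subset_union_left
      · exact (ih₂ F hF).trans Set.subset_union_right
  | star E₁ ih =>
      rintro F ⟨G, hG, rfl⟩
      show aderiv a (RegularExpression.comp G E₁.star) ⊆ _
      simp only [aderiv, supp]
      split
      · exact Set.union_subset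
          (Set.image_mono (ih G hG))
          (Set.image_mono (aderiv_subset_supp a E₁))
      · exact Set.image_mono (ih G hG)

lemma aderiv_insert {α : Type*} (a : α) (E : RegularExpression α) :
    ∀ F ∈ insert E (supp E), aderiv a F ⊆ supp E := by
  rintro F (rfl | hF)
  · exact aderiv_subset_supp a F
  · exact aderiv_supp_subset a E F hF

lemma aderivWord_subset {α : Type*} (E : RegularExpression α) :
    ∀ (w : List α), ∀ F ∈ insert E (supp E), aderivWord w F ⊆ insert E (supp E) := by
  intro w
  induction w with
  | nil =>
      intro F hF
      simpa [aderivWord] using hF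
  | cons a w ih =>
      intro F hF
      simp only [aderivWord]
      refine Set.iUnion₂_subset fun G hG => ?_
      exact ih G (Set.mem_insert_iff.mpr (Or.inr (aderiv_insert a E F hF hG)))

end AntimirovAux

theorem antimirov_finiteness {α : Type*} (E : RegularExpression α) :
    (⋃ w : List α, aderivWord w E).Finite ∧
      (Set.range fun w : List α => aderivWord w E).Finite := by
  have hfin : (insert E (AntimirovAux.supp E)).Finite :=
    (AntimirovAux.supp_finite E).insert E
  have hsub : ∀ w : List α, aderivWord w E ⊆ insert E (AntimirovAux.supp E) :=
    fun w => AntimirovAux.aderivWord_subset E w E (Set.mem_insert _ _)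
  constructor
  · exact hfin.subset (Set.iUnion_subset hsub)
  · refine (hfin.finite_subsets).subset ?_
    rintro _ ⟨w, rfl⟩
    exact hsub w
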